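/- The number of lattice paths from (0,0,0) to (n,n,n) using unit steps in the positive x, y, z directions that stay within the region {(x,y,z) ∈ ℤ³ : 0 ≤ z ≤ y ≤ x ≤ y+1} equals (1/(2n+1)) * binomial(3n, n). -/

import Mathlib

/-- The three step types of a Motzkin path: H = (1,0), U = (1,1), D = (1,-1). -/
inductive Step : Type | H | U | D
deriving DecidableEq, Repr

/-- The region 0 ≤ z ≤ y ≤ x ≤ y + 1 in ℤ³. -/
def InRegion (p : ℤ × ℤ × ℤ) : Prop :=
  0 ≤ p.2.2 ∧ p.2.2 ≤ p.2.1 ∧ p.2.1 ≤ p.1 ∧ p.1 ≤ p.2.1 + 1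

/-- A lattice path from (0,0,0) to (n,n,n) with unit steps in the positive coordinate
directions, all of whose intermediate points lie in the region 0 ≤ z ≤ y ≤ x ≤ y+1.
The path is modelled by its list of steps; points are partial sums. -/
def IsFrogPath (n : ℕ) (s : List (ℤ × ℤ × ℤ)) : Prop :=
  (∀ m ∈ s, m = (1, 0, 0) ∨ m = (0, 1, 0) ∨ m = (0, 0, 1)) ∧
  (∀ p : List (ℤ × ℤ × ℤ), p <+: s → InRegion p.sum) ∧
  s.sum = ((n : ℤ), (n : ℤ), (n : ℤ))

namespace FrogAux

abbrev V : Type := ℤ × ℤ × ℤ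

def T (v : V) : Set (List V) :=
  {s | (∀ m ∈ s, m = (1, 0, 0) ∨ m = (0, 1, 0) ∨ m = (0, 0, 1)) ∧
    (∀ p : List V, p <+: s → InRegion p.sum) ∧ s.sum = v}

lemma sum_coords (s : List V)
    (h : ∀ m ∈ s, m = ((1:ℤ), (0:ℤ), (0:ℤ)) ∨ m = (0, 1, 0) ∨ m = (0, 0, 1)) :
    s.sum.1 + s.sum.2.1 + s.sum.2.2 = s.length := by
  induction s with
  | nil => simp
  | cons a t ih =>
    have ht := ih (fun m hm => h m (by simp [hm]))
    have ha := h a (by simp)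
    simp only [List.sum_cons, List.length_cons, Prod.fst_add, Prod.snd_add]
    rcases ha with rfl | rfl | rfl <;> push_cast <;> omega

lemma finite_mem_len (S : Set V) (hS : S.Finite) :
    ∀ K, {l : List V | l.length ≤ K ∧ ∀ x ∈ l, x ∈ S}.Finite := by
  intro K
  induction K with
  | zero =>
    apply Set.Finite.subset (Set.finite_singleton ([] : List V))
    rintro l ⟨hl, -⟩
    simp [List.length_eq_zero_iff.mp (Nat.le_zero.mp hl)]
  | succ K ih =>
    apply Set.Finite.subset
      (((hS.prod ih).image (fun p : V × List V => p.1 :: p.2)).insert [])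
    rintro l ⟨hl, hm⟩
    cases l with
    | nil => exact Set.mem_insert _ _
    | cons a t =>
      refine Set.mem_insert_iff.mpr (Or.inr ⟨(a, t), ⟨hm a (by simp),
        ⟨by simpa using hl, fun x hx => hm x (by simp [hx])⟩⟩, rfl⟩)

lemma finite_T (v : V) : (T v).Finite := by
  apply Set.Finite.subset (finite_mem_len {(1,0,0), (0,1,0), (0,0,1)}
    (Set.toFinite _) (v.1 + v.2.1 + v.2.2).toNat)
  rintro s ⟨h1, h2, h3⟩
  refine ⟨?_, fun x hx => by rcases h1 x hx with h | h | h <;> simp [h]⟩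
  have := sum_coords s h1
  rw [h3] at this
  omega

lemma T_empty {v : V} (hv : ¬ InRegion v) : T v = ∅ := by
  ext s
  simp only [Set.mem_empty_iff_false, iff_false]
  rintro ⟨h1, h2, h3⟩
  exact hv (h3 ▸ h2 s List.prefix_rfl)

lemma T_zero : T ((0:ℤ), (0:ℤ), (0:ℤ)) = {[]} := by
  ext s
  constructor
  · rintro ⟨h1, h2, h3⟩
    have h4 := sum_coords s h1
    rw [h3] at h4
    norm_num at h4
    simp only [Set.mem_singleton_iff]
    exact List.length_eq_zero_iff.mp (by omega)
  · rintro rfl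
    refine ⟨by simp, ?_, by simp; rfl⟩
    intro p hp
    rw [List.prefix_nil.mp hp]
    exact ⟨le_refl 0, le_refl 0, le_refl 0, by norm_num⟩

lemma mem_T_concat {v u : V} (hv : InRegion v)
    {t : List V} (ht : t ∈ T (v - u))
    (hu : u = ((1:ℤ), 0, 0) ∨ u = (0, 1, 0) ∨ u = (0, 0, 1)) :
    t ++ [u] ∈ T v := by
  obtain ⟨h1, h2, h3⟩ := ht
  refine ⟨?_, ?_, ?_⟩
  · intro m hm
    rcases List.mem_append.mp hm with h | h
    · exact h1 m h
    · simp only [List.mem_singleton] at h; subst h; exact hu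
  · intro p hp
    rcases List.prefix_concat_iff.mp hp with rfl | hp
    · rw [List.sum_append, h3]
      simpa using hv
    · exact h2 p hp
  · rw [List.sum_append, h3]; simp

lemma T_decomp {v : V} (hv : InRegion v) (h0 : v ≠ ((0:ℤ), (0:ℤ), (0:ℤ))) :
    T v = ((fun t => t ++ [((1:ℤ), (0:ℤ), (0:ℤ))]) '' T (v - (1, 0, 0))) ∪
          ((fun t => t ++ [((0:ℤ), (1:ℤ), (0:ℤ))]) '' T (v - (0, 1, 0))) ∪
          ((fun t => t ++ [((0:ℤ), (0:ℤ), (1:ℤ))]) '' T (v - (0, 0, 1))) := by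
  ext s
  constructor
  · rintro ⟨h1, h2, h3⟩
    have hs : s ≠ [] := by rintro rfl; exact h0 (h3.symm.trans rfl)
    have hlast : s.dropLast ++ [s.getLast hs] = s := List.dropLast_append_getLast hs
    have hu : s.getLast hs ∈ s := List.getLast_mem hs
    have hT : s.dropLast ∈ T (v - s.getLast hs) := by
      refine ⟨fun m hm => h1 m ((List.dropLast_prefix s).subset hm),
        fun p hp => h2 p (hp.trans (List.dropLast_prefix s)), ?_⟩
      have hsum : s.dropLast.sum + s.getLast hs = v := by
        rw [← h3]
        conv_rhs => rw [← hlast]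
        simp [List.sum_append]
      exact eq_sub_of_add_eq hsum
    rcases h1 _ hu with h | h | h
    · exact Or.inl (Or.inl ⟨s.dropLast, h ▸ hT, by rw [← h]; exact hlast⟩)
    · exact Or.inl (Or.inr ⟨s.dropLast, h ▸ hT, by rw [← h]; exact hlast⟩)
    · exact Or.inr ⟨s.dropLast, h ▸ hT, by rw [← h]; exact hlast⟩
  · rintro ((⟨t, ht, rfl⟩ | ⟨t, ht, rfl⟩) | ⟨t, ht, rfl⟩)
    · exact mem_T_concat hv ht (Or.inl rfl)
    · exact mem_T_concat hv ht (Or.inr (Or.inl rfl))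
    · exact mem_T_concat hv ht (Or.inr (Or.inr rfl))

lemma disj_aux {w w' : V} {u u' : V} (huu : u ≠ u') :
    Disjoint ((fun t : List V => t ++ [u]) '' T w) ((fun t : List V => t ++ [u']) '' T w') := by
  rw [Set.disjoint_left]
  rintro s ⟨t, -, rfl⟩ ⟨t', -, h⟩
  apply huu
  have h1 : (t ++ [u]).getLast? = some u := List.getLast?_concat
  have h2 : (t' ++ [u']).getLast? = some u' := List.getLast?_concat
  rw [show t' ++ [u'] = t ++ [u] from h, h1] at h2
  exact Option.some_injective _ h2

lemma ncard_T {v : V} (hv : InRegion v) (h0 : v ≠ ((0:ℤ), (0:ℤ), (0:ℤ))) :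
    (T v).ncard =
      (T (v - (1, 0, 0))).ncard + (T (v - (0, 1, 0))).ncard + (T (v - (0, 0, 1))).ncard := by
  have fin : ∀ (w u : V), ((fun t : List V => t ++ [u]) '' T w).Finite :=
    fun w u => (finite_T w).image _
  have inj : ∀ u : V, Function.Injective (fun t : List V => t ++ [u]) :=
    fun u => List.append_left_injective _
  rw [T_decomp hv h0,
    Set.ncard_union_eq (Set.disjoint_union_left.mpr
      ⟨disj_aux (by decide), disj_aux (by decide)⟩) ((fin _ _).union (fin _ _)) (fin _ _),
    Set.ncard_union_eq (disj_aux (by decide)) (fin _ _) (fin _ _),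
    Set.ncard_image_of_injective _ (inj _), Set.ncard_image_of_injective _ (inj _),
    Set.ncard_image_of_injective _ (inj _)]

/-- The closed form: `C(N,c) - 2*C(N,c-1)`. -/
def ch (N c : ℕ) : ℤ :=
  (N.choose c : ℤ) - 2 * (if c = 0 then 0 else (N.choose (c - 1) : ℤ))

lemma ch_pascal (N c : ℕ) :
    ch (N + 1) c = ch N c + (if c = 0 then 0 else ch N (c - 1)) := by
  match c with
  | 0 => simp [ch]
  | 1 => simp [ch, Nat.choose_succ_succ]; ring
  | (c + 2) =>
    simp only [ch, show c + 2 - 1 = c + 1 by omega, show c + 1 - 1 = c by omega,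
      if_neg (by omega : ¬ c + 2 = 0), if_neg (by omega : ¬ c + 1 = 0)]
    rw [Nat.choose_succ_succ' N (c + 1), Nat.choose_succ_succ' N c]
    push_cast
    ring

lemma ch_diag (m : ℕ) : ch (3 * m + 3) (m + 1) = ch (3 * m + 2) m := by
  have key : ((3 * m + 2).choose (m + 1) : ℤ) = 2 * (3 * m + 2).choose m := by
    have h := Nat.choose_succ_right_eq (3 * m + 2) m
    rw [show 3 * m + 2 - m = 2 * (m + 1) by omega] at h
    have h' : ((3 * m + 2).choose (m + 1) : ℤ) * (m + 1) =
        ((3 * m + 2).choose m : ℤ) * (2 * (m + 1)) := by exact_mod_cast h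
    refine mul_right_cancel₀ (b := ((m : ℤ) + 1)) (by positivity) ?_
    rw [h']; ring
  match m with
  | 0 => simp [ch]
  | (t + 1) =>
    simp only [ch, Nat.add_sub_cancel, if_neg (by omega : ¬ t + 1 + 1 = 0),
      if_neg (by omega : ¬ t + 1 = 0)]
    have p1 : (3 * (t + 1) + 3).choose (t + 1 + 1) =
        (3 * (t + 1) + 2).choose (t + 1) + (3 * (t + 1) + 2).choose (t + 1 + 1) := by
      rw [show 3 * (t + 1) + 3 = (3 * (t + 1) + 2) + 1 by ring]
      exact Nat.choose_succ_succ' _ _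
    have p2 : (3 * (t + 1) + 3).choose (t + 1) =
        (3 * (t + 1) + 2).choose t + (3 * (t + 1) + 2).choose (t + 1) := by
      rw [show 3 * (t + 1) + 3 = (3 * (t + 1) + 2) + 1 by ring]
      exact Nat.choose_succ_succ' _ _
    have key' : ((3 * (t + 1) + 2).choose (t + 1 + 1) : ℤ) =
        2 * (3 * (t + 1) + 2).choose (t + 1) := by exact_mod_cast key
    rw [p1, p2]
    push_cast [key']
    ring

lemma ncard_T_empty {v : V} (hv : ¬ InRegion v) : ((T v).ncard : ℤ) = 0 := by
  rw [T_empty hv, Set.ncard_empty]; rfl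

lemma count : ∀ (k a b c : ℕ), a + b + c = k → c ≤ b → b ≤ a → a ≤ b + 1 →
    ((T ((a : ℤ), (b : ℤ), (c : ℤ))).ncard : ℤ) = ch (a + b + c) c := by
  intro k
  induction k using Nat.strong_induction_on with
  | _ k IH =>
  intro a b c hk h1 h2 h3
  by_cases ha : a = 0
  · obtain rfl := ha
    obtain rfl : b = 0 := by omega
    obtain rfl : c = 0 := by omega
    rw [show (((0:ℕ):ℤ), ((0:ℕ):ℤ), ((0:ℕ):ℤ)) = ((0:ℤ), (0:ℤ), (0:ℤ)) by norm_num,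
      T_zero, Set.ncard_singleton]
    simp [ch]
  · have hv : InRegion ((a:ℤ), (b:ℤ), (c:ℤ)) := by
      refine ⟨?_, ?_, ?_, ?_⟩ <;> simp only [] <;> push_cast <;> omega
    have h0 : ((a:ℤ), (b:ℤ), (c:ℤ)) ≠ ((0:ℤ), (0:ℤ), (0:ℤ)) := by
      simp only [ne_eq, Prod.mk.injEq, not_and]
      intro h
      exact absurd (by exact_mod_cast h : a = 0) ha
    have sub1 : ((a:ℤ), (b:ℤ), (c:ℤ)) - ((1:ℤ), (0:ℤ), (0:ℤ)) = ((a:ℤ) - 1, (b:ℤ), (c:ℤ)) := by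
      simp [Prod.ext_iff]
    have sub2 : ((a:ℤ), (b:ℤ), (c:ℤ)) - ((0:ℤ), (1:ℤ), (0:ℤ)) = ((a:ℤ), (b:ℤ) - 1, (c:ℤ)) := by
      simp [Prod.ext_iff]
    have sub3 : ((a:ℤ), (b:ℤ), (c:ℤ)) - ((0:ℤ), (0:ℤ), (1:ℤ)) = ((a:ℤ), (b:ℤ), (c:ℤ) - 1) := by
      simp [Prod.ext_iff]
    rw [ncard_T hv h0, sub1, sub2, sub3]
    push_cast
    by_cases hab : a = b
    · subst hab
      have t1 : ((T ((a:ℤ) - 1, (a:ℤ), (c:ℤ))).ncard : ℤ) = 0 :=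
        ncard_T_empty (fun hr => by have := hr.2.2.1; simp only [] at this; omega)
      rw [t1]
      by_cases hcb : c = a
      · subst hcb
        obtain ⟨m, rfl⟩ : ∃ m, c = m + 1 := ⟨c - 1, by omega⟩
        have t2 : ((T (((m:ℤ)+1), ((m:ℤ)+1) - 1, ((m:ℤ)+1))).ncard : ℤ) = 0 :=
          ncard_T_empty (fun hr => by have := hr.2.1; simp only [] at this; omega)
        have e3 : ((((m+1:ℕ)):ℤ), (((m+1:ℕ)):ℤ), (((m+1:ℕ)):ℤ) - 1) =
            ((((m+1:ℕ)):ℤ), (((m+1:ℕ)):ℤ), ((m:ℕ):ℤ)) := by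
          simp [Prod.ext_iff]
        have t3 := IH (k - 1) (by omega) (m + 1) (m + 1) m (by omega) (by omega)
          (by omega) (by omega)
        push_cast at t2 e3 t3 ⊢
        rw [t2, e3, t3, show (m+1) + (m+1) + m = 3 * m + 2 by ring,
          show (m+1) + (m+1) + (m+1) = 3 * m + 3 by ring]
        rw [ch_diag m]
        ring
      · -- c < b = a
        have hb1 : 1 ≤ a := by omega
        obtain ⟨b', rfl⟩ : ∃ b', a = b' + 1 := ⟨a - 1, by omega⟩
        have e2 : ((((b'+1:ℕ)):ℤ), (((b'+1:ℕ)):ℤ) - 1, ((c:ℕ):ℤ)) =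
            ((((b'+1:ℕ)):ℤ), ((b':ℕ):ℤ), ((c:ℕ):ℤ)) := by simp [Prod.ext_iff]
        have t2 := IH (k - 1) (by omega) (b' + 1) b' c (by omega) (by omega)
          (by omega) (by omega)
        by_cases hc : c = 0
        · subst hc
          have t3 : ((T (((b':ℤ)+1), ((b':ℤ)+1), ((0:ℕ):ℤ) - 1)).ncard : ℤ) = 0 :=
            ncard_T_empty (fun hr => by have := hr.1; simp only [] at this; omega)
          push_cast at e2 t2 t3 ⊢
          rw [e2, t2, t3]
          rw [show (b'+1) + (b'+1) + 0 = ((b'+1) + b' + 0) + 1 by ring, ch_pascal]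
          simp
        · obtain ⟨c', rfl⟩ : ∃ c', c = c' + 1 := ⟨c - 1, by omega⟩
          have e3 : ((((b'+1:ℕ)):ℤ), (((b'+1:ℕ)):ℤ), (((c'+1:ℕ)):ℤ) - 1) =
              ((((b'+1:ℕ)):ℤ), (((b'+1:ℕ)):ℤ), ((c':ℕ):ℤ)) := by simp [Prod.ext_iff]
          have t3 := IH (k - 1) (by omega) (b' + 1) (b' + 1) c' (by omega) (by omega)
            (by omega) (by omega)
          push_cast at e2 t2 e3 t3 ⊢
          rw [e2, t2, e3, t3]
          rw [show (b'+1) + (b'+1) + (c'+1) = ((b'+1) + b' + (c'+1)) + 1 by ring, ch_pascal]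
          rw [show (b'+1) + (b'+1) + c' = (b'+1) + b' + (c'+1) by ring]
          simp only [if_neg (by omega : ¬ c' + 1 = 0), Nat.add_sub_cancel]
          ring
    · -- a = b + 1
      obtain rfl : a = b + 1 := by omega
      have e1 : ((((b+1:ℕ)):ℤ) - 1, ((b:ℕ):ℤ), ((c:ℕ):ℤ)) =
          (((b:ℕ):ℤ), ((b:ℕ):ℤ), ((c:ℕ):ℤ)) := by simp [Prod.ext_iff]
      have t1 := IH (k - 1) (by omega) b b c (by omega) (by omega) (by omega) (by omega)
      have t2 : ((T (((b:ℤ)+1), ((b:ℤ)) - 1, ((c:ℕ):ℤ))).ncard : ℤ) = 0 :=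
        ncard_T_empty (fun hr => by
          have := hr.2.2.2; have h' := hr.2.2.1; simp only [] at this h'; omega)
      by_cases hc : c = 0
      · subst hc
        have t3 : ((T (((b:ℤ)+1), ((b:ℤ)), ((0:ℕ):ℤ) - 1)).ncard : ℤ) = 0 :=
          ncard_T_empty (fun hr => by have := hr.1; simp only [] at this; omega)
        push_cast at e1 t1 t2 t3 ⊢
        rw [e1, t1, t2, t3]
        rw [show (b+1) + b + 0 = (b + b + 0) + 1 by ring, ch_pascal]
        simp
      · obtain ⟨c', rfl⟩ : ∃ c', c = c' + 1 := ⟨c - 1, by omega⟩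
        have e3 : ((((b+1:ℕ)):ℤ), ((b:ℕ):ℤ), (((c'+1:ℕ)):ℤ) - 1) =
            ((((b+1:ℕ)):ℤ), ((b:ℕ):ℤ), ((c':ℕ):ℤ)) := by simp [Prod.ext_iff]
        have t3 := IH (k - 1) (by omega) (b + 1) b c' (by omega) (by omega) (by omega)
          (by omega)
        push_cast at e1 t1 t2 e3 t3 ⊢
        rw [e1, t1, t2, e3, t3]
        rw [show (b+1) + b + (c'+1) = (b + b + (c'+1)) + 1 by ring, ch_pascal]
        rw [show (b+1) + b + c' = b + b + (c'+1) by ring]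
        simp only [if_neg (by omega : ¬ c' + 1 = 0), Nat.add_sub_cancel]
        ring

lemma card_eq (n : ℕ) : Nat.card {s : List (ℤ × ℤ × ℤ) // IsFrogPath n s} =
    (T ((n:ℤ), (n:ℤ), (n:ℤ))).ncard := by
  rw [← Nat.card_coe_set_eq]
  exact Nat.card_congr (Equiv.subtypeEquivRight fun s => Iff.rfl)

theorem frog_path_count (n : ℕ) :
    Nat.card {s : List (ℤ × ℤ × ℤ) // IsFrogPath n s} =
      (3 * n).choose n / (2 * n + 1) := by
  have hcount := count (n + n + n) n n n rfl le_rfl le_rfl (Nat.le_succ n)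
  rw [card_eq n]
  rcases Nat.eq_zero_or_pos n with rfl | hn
  · simp only [ch, Nat.cast_zero] at hcount
    norm_num at hcount ⊢
    exact_mod_cast hcount
  · obtain ⟨m, rfl⟩ : ∃ m, n = m + 1 := ⟨n - 1, by omega⟩
    simp only [ch, if_neg (by omega : ¬ m + 1 = 0), Nat.add_sub_cancel,
      show (m+1) + (m+1) + (m+1) = 3 * (m+1) by ring] at hcount
    have key := Nat.choose_succ_right_eq (3 * (m + 1)) m
    rw [show 3 * (m + 1) - m = 2 * (m + 1) + 1 by omega] at key
    have keyz : ((3 * (m+1)).choose (m+1) : ℤ) * (m + 1) =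
        ((3 * (m+1)).choose m : ℤ) * (2 * (m + 1) + 1) := by exact_mod_cast key
    have hmulz : ((2 * (m + 1) + 1 : ℕ) : ℤ) * ((T (((m+1:ℕ):ℤ), ((m+1:ℕ):ℤ), ((m+1:ℕ):ℤ))).ncard : ℤ)
        = ((3 * (m+1)).choose (m+1) : ℤ) := by
      rw [hcount]; push_cast; linear_combination (2 : ℤ) * keyz
    have hmul : (2 * (m + 1) + 1) * (T (((m+1:ℕ):ℤ), ((m+1:ℕ):ℤ), ((m+1:ℕ):ℤ))).ncard
        = (3 * (m+1)).choose (m+1) := by exact_mod_cast hmulz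
    rw [← hmul, Nat.mul_div_cancel_left _ (by omega)]

end FrogAux

theorem frog_path_count (n : ℕ) :
    Nat.card {s : List (ℤ × ℤ × ℤ) // IsFrogPath n s} =
      (3 * n).choose n / (2 * n + 1) :=
  FrogAux.frog_path_count n
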